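/- Let A₁ ∈ ℂ^{M₁×N₁} and A₂ ∈ ℂ^{M₂×N₂}, and let the Kronecker product A = A₁ ⊗ A₂ ∈ ℂ^{M₁M₂×N₁N₂} act on 3-level block vectors in ℂ^{N₁'·N₂'·N₃'} where N₁ = N₁'N₂' and N₂ = N₃' (so the scalar entries within each level-2 block correspond to the columns of A₂). Then for any tuple s = (s₁,s₂,s₃) of positive integers with s₁ ≤ N₁', s₂ ≤ N₂', s₃ ≤ N₃', the hierarchical restricted isometry constant satisfies δ_{(s₁,s₂,s₃)}(A₁ ⊗ A₂) ≤ (1 + δ_{s₁s₂}(A₁))(1 + δ_{s₃}(A₂)) − 1. -/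

import Mathlib

open scoped Classical

noncomputable section

/-- A vector is `s`-sparse if at most `s` of its entries are nonzero. -/
def Sparse {ι : Type*} [Fintype ι] (s : ℕ) (x : ι → ℂ) : Prop :=
  (Finset.univ.filter fun i => x i ≠ 0).card ≤ s

/-- Squared Euclidean norm. -/
def sqNorm {ι : Type*} [Fintype ι] (x : ι → ℂ) : ℝ := ∑ i, ‖x i‖ ^ 2

/-- Euclidean norm. -/
def enorm {ι : Type*} [Fintype ι] (x : ι → ℂ) : ℝ := Real.sqrt (sqNorm x)

/-- The restricted isometry constant `δ_s(A)`: the smallest `δ ≥ 0` such that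
`(1−δ)‖x‖² ≤ ‖Ax‖² ≤ (1+δ)‖x‖²` for every `s`-sparse `x`. -/
def RIPconst {m n : Type*} [Fintype m] [Fintype n] (A : Matrix m n ℂ) (s : ℕ) : ℝ :=
  sInf {δ : ℝ | 0 ≤ δ ∧ ∀ x : n → ℂ, Sparse s x →
    (1 - δ) * sqNorm x ≤ sqNorm (A.mulVec x) ∧ sqNorm (A.mulVec x) ≤ (1 + δ) * sqNorm x}

/-- `(s₁,s₂,s₃)`-hierarchical sparsity of a 3-level block vector: at most `s₁`
of the `N₁` level-1 blocks are nonzero, within each block at most `s₂` of the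
`N₂` level-2 blocks are nonzero, and each of those contains at most `s₃`
nonzero entries. -/
def HiSparse3 {N₁ N₂ N₃ : ℕ} (s₁ s₂ s₃ : ℕ) (x : Fin N₁ × Fin N₂ × Fin N₃ → ℂ) : Prop :=
  (Finset.univ.filter fun i₁ : Fin N₁ => (fun p : Fin N₂ × Fin N₃ => x (i₁, p)) ≠ 0).card ≤ s₁ ∧
  ∀ i₁ : Fin N₁,
    (Finset.univ.filter fun i₂ : Fin N₂ => (fun i₃ : Fin N₃ => x (i₁, i₂, i₃)) ≠ 0).card ≤ s₂ ∧
    ∀ i₂ : Fin N₂, Sparse s₃ (fun i₃ : Fin N₃ => x (i₁, i₂, i₃))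

/-- The hierarchical restricted isometry constant `δ_{(s₁,s₂,s₃)}(A)` of a
matrix acting on 3-level block vectors. -/
def HiRIPconst3 {m : Type*} [Fintype m] {N₁ N₂ N₃ : ℕ}
    (A : Matrix m (Fin N₁ × Fin N₂ × Fin N₃) ℂ) (s₁ s₂ s₃ : ℕ) : ℝ :=
  sInf {δ : ℝ | 0 ≤ δ ∧ ∀ x : Fin N₁ × Fin N₂ × Fin N₃ → ℂ, HiSparse3 s₁ s₂ s₃ x →
    (1 - δ) * sqNorm x ≤ sqNorm (A.mulVec x) ∧ sqNorm (A.mulVec x) ≤ (1 + δ) * sqNorm x}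

/-- For a Kronecker product `A = A₁ ⊗ A₂` acting on 3-level
block vectors in `ℂ^{N₁'·N₂'·N₃'}` with `N₁ = N₁'N₂'` and `N₂ = N₃'` (the
scalar entries within each level-2 block correspond to the columns of `A₂`),
one has `δ_{(s₁,s₂,s₃)}(A₁ ⊗ A₂) ≤ (1 + δ_{s₁s₂}(A₁))(1 + δ_{s₃}(A₂)) − 1`. -/
lemma sqNorm_nonneg' {ι : Type*} [Fintype ι] (x : ι → ℂ) : 0 ≤ sqNorm x :=
  Finset.sum_nonneg fun _ _ => sq_nonneg _

lemma sqNorm_eq_zero' {ι : Type*} [Fintype ι] {x : ι → ℂ} (h : sqNorm x = 0) : x = 0 := by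
  funext i
  have h2 := (Finset.sum_eq_zero_iff_of_nonneg (fun i _ => sq_nonneg ‖x i‖)).1 h i (Finset.mem_univ i)
  have h3 : ‖x i‖ = 0 := by
    have := sq_eq_zero_iff.1 h2
    simpa using this
  simpa using h3

lemma RIPconst_spec {m n : Type*} [Fintype m] [Fintype n] (A : Matrix m n ℂ) (s : ℕ) :
    0 ≤ RIPconst A s ∧ ∀ x : n → ℂ, Sparse s x →
      (1 - RIPconst A s) * sqNorm x ≤ sqNorm (A.mulVec x) ∧
      sqNorm (A.mulVec x) ≤ (1 + RIPconst A s) * sqNorm x := by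
  set S := {δ : ℝ | 0 ≤ δ ∧ ∀ x : n → ℂ, Sparse s x →
    (1 - δ) * sqNorm x ≤ sqNorm (A.mulVec x) ∧ sqNorm (A.mulVec x) ≤ (1 + δ) * sqNorm x} with hS
  have hRIP : RIPconst A s = sInf S := rfl
  set C : ℝ := ∑ i : m, ∑ j : n, ‖A i j‖ ^ 2 with hC
  have hC0 : 0 ≤ C := Finset.sum_nonneg fun _ _ => Finset.sum_nonneg fun _ _ => sq_nonneg _
  have hgrow : ∀ x : n → ℂ, sqNorm (A.mulVec x) ≤ C * sqNorm x := by
    intro x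
    have h1 : ∀ i : m, ‖A.mulVec x i‖ ^ 2 ≤ (∑ j : n, ‖A i j‖ ^ 2) * sqNorm x := by
      intro i
      have h2 : ‖A.mulVec x i‖ ≤ ∑ j : n, ‖A i j‖ * ‖x j‖ := by
        calc ‖A.mulVec x i‖ = ‖∑ j : n, A i j * x j‖ := rfl
          _ ≤ ∑ j : n, ‖A i j * x j‖ := norm_sum_le _ _
          _ = ∑ j : n, ‖A i j‖ * ‖x j‖ := by simp [norm_mul]
      calc ‖A.mulVec x i‖ ^ 2 ≤ (∑ j : n, ‖A i j‖ * ‖x j‖) ^ 2 :=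
            pow_le_pow_left₀ (norm_nonneg _) h2 2
        _ ≤ (∑ j : n, ‖A i j‖ ^ 2) * ∑ j : n, ‖x j‖ ^ 2 :=
            Finset.sum_mul_sq_le_sq_mul_sq _ _ _
    calc sqNorm (A.mulVec x) ≤ ∑ i : m, (∑ j : n, ‖A i j‖ ^ 2) * sqNorm x :=
          Finset.sum_le_sum fun i _ => h1 i
      _ = C * sqNorm x := by rw [hC, Finset.sum_mul]
  have hne : S.Nonempty := by
    refine ⟨1 + C, ⟨by positivity, fun x _ => ⟨?_, ?_⟩⟩⟩
    · have h1 : (1 - (1 + C)) * sqNorm x ≤ 0 :=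
        mul_nonpos_of_nonpos_of_nonneg (by linarith) (sqNorm_nonneg' x)
      exact h1.trans (sqNorm_nonneg' _)
    · calc sqNorm (A.mulVec x) ≤ C * sqNorm x := hgrow x
        _ ≤ (1 + (1 + C)) * sqNorm x :=
          mul_le_mul_of_nonneg_right (by linarith) (sqNorm_nonneg' x)
  have h0 : 0 ≤ RIPconst A s := le_csInf hne fun δ hδ => hδ.1
  refine ⟨h0, fun x hx => ?_⟩
  by_cases hq : sqNorm x = 0
  · have hx0 := sqNorm_eq_zero' hq
    rw [hx0]
    simp [Matrix.mulVec_zero, sqNorm]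
  · have hqpos : 0 < sqNorm x := lt_of_le_of_ne (sqNorm_nonneg' x) (Ne.symm hq)
    constructor
    · refine le_of_forall_pos_le_add fun ε hε => ?_
      obtain ⟨δ, hδS, hδlt⟩ := Real.lt_sInf_add_pos hne (show 0 < ε / sqNorm x by positivity)
      have h1 := (hδS.2 x hx).1
      have h3 : (δ - RIPconst A s) * sqNorm x ≤ (ε / sqNorm x) * sqNorm x :=
        mul_le_mul_of_nonneg_right (by rw [hRIP]; linarith) hqpos.le
      rw [div_mul_cancel₀ ε hq] at h3
      nlinarith
    · refine le_of_forall_pos_le_add fun ε hε => ?_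
      obtain ⟨δ, hδS, hδlt⟩ := Real.lt_sInf_add_pos hne (show 0 < ε / sqNorm x by positivity)
      have h1 := (hδS.2 x hx).2
      have h3 : (δ - RIPconst A s) * sqNorm x ≤ (ε / sqNorm x) * sqNorm x :=
        mul_le_mul_of_nonneg_right (by rw [hRIP]; linarith) hqpos.le
      rw [div_mul_cancel₀ ε hq] at h3
      nlinarith

theorem hiRIP_kronecker_inner (M₁ M₂ N₁' N₂' N₃' s₁ s₂ s₃ : ℕ)
    (hs₁ : 0 < s₁) (hs₂ : 0 < s₂) (hs₃ : 0 < s₃)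
    (hN₁ : s₁ ≤ N₁') (hN₂ : s₂ ≤ N₂') (hN₃ : s₃ ≤ N₃')
    (A₁ : Matrix (Fin M₁) (Fin N₁' × Fin N₂') ℂ) (A₂ : Matrix (Fin M₂) (Fin N₃') ℂ)
    (A : Matrix (Fin M₁ × Fin M₂) (Fin N₁' × Fin N₂' × Fin N₃') ℂ)
    (hA : A = fun r j => A₁ r.1 (j.1, j.2.1) * A₂ r.2 j.2.2) :
    HiRIPconst3 A s₁ s₂ s₃ ≤ (1 + RIPconst A₁ (s₁ * s₂)) * (1 + RIPconst A₂ s₃) - 1 := by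
  obtain ⟨hδ₁0, hR1⟩ := RIPconst_spec A₁ (s₁ * s₂)
  obtain ⟨hδ₂0, hR2⟩ := RIPconst_spec A₂ s₃
  set δ₁ := RIPconst A₁ (s₁ * s₂) with hδ₁
  set δ₂ := RIPconst A₂ s₃ with hδ₂
  set δ : ℝ := (1 + δ₁) * (1 + δ₂) - 1 with hδdef
  have hmem : δ ∈ {δ : ℝ | 0 ≤ δ ∧ ∀ x : Fin N₁' × Fin N₂' × Fin N₃' → ℂ, HiSparse3 s₁ s₂ s₃ x →
      (1 - δ) * sqNorm x ≤ sqNorm (A.mulVec x) ∧ sqNorm (A.mulVec x) ≤ (1 + δ) * sqNorm x} := by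
    constructor
    · rw [hδdef]; nlinarith
    intro x hx
    set xc : (Fin N₁' × Fin N₂') → Fin N₃' → ℂ := fun j l => x (j.1, j.2, l) with hxc
    set y : Fin M₂ → (Fin N₁' × Fin N₂') → ℂ := fun r₂ j => A₂.mulVec (xc j) r₂ with hy
    have key : ∀ r₁ r₂, A.mulVec x (r₁, r₂) = A₁.mulVec (y r₂) r₁ := by
      intro r₁ r₂
      subst hA
      simp only [Matrix.mulVec, dotProduct, hy, hxc, Fintype.sum_prod_type, Finset.mul_sum]
      exact Finset.sum_congr rfl fun j₁ _ => Finset.sum_congr rfl fun j₂ _ =>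
        Finset.sum_congr rfl fun l _ => by ring
    have sqA : sqNorm (A.mulVec x) = ∑ r₂ : Fin M₂, sqNorm (A₁.mulVec (y r₂)) := by
      simp only [sqNorm, Fintype.sum_prod_type]
      rw [Finset.sum_comm]
      exact Finset.sum_congr rfl fun r₂ _ => Finset.sum_congr rfl fun r₁ _ => by rw [key]
    have Tsum : ∑ r₂ : Fin M₂, sqNorm (y r₂)
        = ∑ j : Fin N₁' × Fin N₂', sqNorm (A₂.mulVec (xc j)) := by
      simp only [sqNorm]
      rw [Finset.sum_comm]
    have sqx : sqNorm x = ∑ j : Fin N₁' × Fin N₂', sqNorm (xc j) := by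
      simp only [sqNorm, Fintype.sum_prod_type, hxc]
    have hs3 : ∀ j : Fin N₁' × Fin N₂', Sparse s₃ (xc j) := fun j => (hx.2 j.1).2 j.2
    have hsupp : (Finset.univ.filter fun j : Fin N₁' × Fin N₂' => xc j ≠ 0).card ≤ s₁ * s₂ := by
      rw [Finset.card_filter, Fintype.sum_prod_type]
      have hinner : ∀ j₁ : Fin N₁', (∑ j₂ : Fin N₂', if xc (j₁, j₂) ≠ 0 then 1 else 0)
          = (Finset.univ.filter fun j₂ : Fin N₂' => xc (j₁, j₂) ≠ 0).card := by
        intro j₁; rw [Finset.card_filter]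
      have hzero : ∀ j₁ : Fin N₁', ¬((fun p : Fin N₂' × Fin N₃' => x (j₁, p)) ≠ 0) →
          (∑ j₂ : Fin N₂', if xc (j₁, j₂) ≠ 0 then 1 else 0) = 0 := by
        intro j₁ hz
        push_neg at hz
        apply Finset.sum_eq_zero
        intro j₂ _
        have : xc (j₁, j₂) = 0 := by
          funext l
          have := congrFun hz (j₂, l)
          simpa [hxc] using this
        simp [this]
      calc (∑ j₁ : Fin N₁', ∑ j₂ : Fin N₂', if xc (j₁, j₂) ≠ 0 then 1 else 0)
          = ∑ j₁ ∈ Finset.univ.filter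
              (fun i₁ : Fin N₁' => (fun p : Fin N₂' × Fin N₃' => x (i₁, p)) ≠ 0),
              ∑ j₂ : Fin N₂', if xc (j₁, j₂) ≠ 0 then 1 else 0 := by
            refine (Finset.sum_subset (Finset.filter_subset _ _) ?_).symm
            intro j₁ _ hj₁
            exact hzero j₁ (by simpa using hj₁)
        _ ≤ ∑ j₁ ∈ Finset.univ.filter
              (fun i₁ : Fin N₁' => (fun p : Fin N₂' × Fin N₃' => x (i₁, p)) ≠ 0), s₂ := by
            refine Finset.sum_le_sum fun j₁ _ => ?_
            rw [hinner j₁]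
            have h := (hx.2 j₁).1
            have heq : (Finset.univ.filter fun j₂ : Fin N₂' => xc (j₁, j₂) ≠ 0)
                = (Finset.univ.filter fun i₂ : Fin N₂' =>
                    (fun i₃ : Fin N₃' => x (j₁, i₂, i₃)) ≠ 0) := by
              apply Finset.filter_congr
              intro j₂ _
              constructor <;> (intro h1 h2; exact h1 (by funext l; exact congrFun h2 l))
            rw [heq]; exact h
        _ ≤ s₁ * s₂ := by
            rw [Finset.sum_const, smul_eq_mul]
            exact Nat.mul_le_mul_right s₂ hx.1
    have hsY : ∀ r₂ : Fin M₂, Sparse (s₁ * s₂) (y r₂) := by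
      intro r₂
      refine le_trans (Finset.card_le_card ?_) hsupp
      apply Finset.monotone_filter_right
      intro j _ hj
      intro hzc
      exact hj (by simp [hy, hzc, Matrix.mulVec_zero])
    obtain ⟨SA, hSA⟩ : ∃ SA, sqNorm (A.mulVec x) = SA := ⟨_, rfl⟩
    obtain ⟨T, hT⟩ : ∃ T, (∑ r₂ : Fin M₂, sqNorm (y r₂)) = T := ⟨_, rfl⟩
    obtain ⟨X, hX⟩ : ∃ X, sqNorm x = X := ⟨_, rfl⟩
    have hX0 : 0 ≤ X := hX ▸ sqNorm_nonneg' x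
    have hT0 : 0 ≤ T := hT ▸ Finset.sum_nonneg fun _ _ => sqNorm_nonneg' _
    have hup1 : SA ≤ (1 + δ₁) * T := by
      rw [← hSA, ← hT, sqA, Finset.mul_sum]
      exact Finset.sum_le_sum fun r₂ _ => (hR1 _ (hsY r₂)).2
    have hlo1 : (1 - δ₁) * T ≤ SA := by
      rw [← hSA, ← hT, sqA, Finset.mul_sum]
      exact Finset.sum_le_sum fun r₂ _ => (hR1 _ (hsY r₂)).1
    have hT2up : T ≤ (1 + δ₂) * X := by
      rw [← hT, ← hX, Tsum, sqx, Finset.mul_sum]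
      exact Finset.sum_le_sum fun j _ => (hR2 _ (hs3 j)).2
    have hT2lo : (1 - δ₂) * X ≤ T := by
      rw [← hT, ← hX, Tsum, sqx, Finset.mul_sum]
      exact Finset.sum_le_sum fun j _ => (hR2 _ (hs3 j)).1
    rw [hSA, hX]
    constructor
    · by_cases hcase : δ₁ ≤ 1
      · have hprod : (1 - δ₁) * ((1 - δ₂) * X) ≤ (1 - δ₁) * T :=
          mul_le_mul_of_nonneg_left hT2lo (by linarith)
        have hnn : 0 ≤ δ₁ * δ₂ * X := mul_nonneg (mul_nonneg hδ₁0 hδ₂0) hX0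
        rw [hδdef]; nlinarith
      · have hprod : (δ₁ - 1) * T ≤ (δ₁ - 1) * ((1 + δ₂) * X) :=
          mul_le_mul_of_nonneg_left hT2up (by linarith)
        have hnn : 0 ≤ δ₂ * X := mul_nonneg hδ₂0 hX0
        rw [hδdef]; nlinarith
    · have hprod : (1 + δ₁) * T ≤ (1 + δ₁) * ((1 + δ₂) * X) :=
        mul_le_mul_of_nonneg_left hT2up (by linarith)
      rw [hδdef]; nlinarith
  exact csInf_le ⟨0, fun d hd => hd.1⟩ hmem
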